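/- Let C be a t×n binary code satisfying: (i) for any two sets D1, D2 ⊆ {1,…,n} with |D1| = |D2| = d and |D1 ∩ D2| = d − 1, the Boolean sums ∨_{i∈D1} c_i and ∨_{i∈D2} c_i are distinct; and (ii) C is a disjunctive list-decoding code of strength d and list-size at most 1, i.e., the Boolean sum of the columns of any d-element subset covers at most 1 column whose index is not in that subset. Then C is a (=d)-union-free code. -/

import Mathlib

open Finset

/-- The Boolean sum (componentwise OR) of the columns of `C` indexed by `S`. -/
noncomputable def boolSum {t n : ℕ} (C : Fin t → Fin n → Bool) (S : Finset (Fin n)) : Fin t → Bool :=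
  fun r => S.sup fun i => C r i

/-- `covers x y` : the vector `x` covers the vector `y`, i.e. `x ∨ y = x`. -/
def covers {t : ℕ} (x y : Fin t → Bool) : Prop := ∀ r, y r = true → x r = true

instance {t : ℕ} (x y : Fin t → Bool) : Decidable (covers x y) := by
  unfold covers; infer_instance

/-- `C` is `d`-disjunctive: the Boolean sum of any `d` columns covers no other column. -/
def Disjunctive {t n : ℕ} (d : ℕ) (C : Fin t → Fin n → Bool) : Prop :=
  ∀ D : Finset (Fin n), D.card = d → ∀ j ∉ D, ¬ covers (boolSum C D) (fun i => C i j)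

/-- `C` is a strongly `d`-separable matrix. -/
def SSM {t n : ℕ} (d : ℕ) (C : Fin t → Fin n → Bool) : Prop :=
  ∀ D0 : Finset (Fin n), D0.card = d →
    {i : Fin n | ∀ D' : Finset (Fin n), boolSum C D' = boolSum C D0 → i ∈ D'} = ↑D0

/-- `C` is a `(=d)`-union-free code. -/
def UnionFreeEq {t n : ℕ} (d : ℕ) (C : Fin t → Fin n → Bool) : Prop :=
  ∀ D1 D2 : Finset (Fin n), D1.card = d → D2.card = d → D1 ≠ D2 →
    boolSum C D1 ≠ boolSum C D2

/-- `C` is a `(≤d)`-union-free code. -/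
def UnionFreeLe {t n : ℕ} (d : ℕ) (C : Fin t → Fin n → Bool) : Prop :=
  ∀ D1 D2 : Finset (Fin n), D1.card ≤ d → D2.card ≤ d → D1 ≠ D2 →
    boolSum C D1 ≠ boolSum C D2

/-- The number of columns of `C` covered by the vector `r`. -/
def coveredCount {t n : ℕ} (C : Fin t → Fin n → Bool) (r : Fin t → Bool) : ℕ :=
  (Finset.univ.filter fun j : Fin n => covers r (fun i => C i j)).card

/-- `C` is a `(=d)`-union-free code with fast decoding. -/
def UFFDEq {t n : ℕ} (d : ℕ) (C : Fin t → Fin n → Bool) : Prop :=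
  UnionFreeEq d C ∧
    ∀ D : Finset (Fin n), D.card = d →
      (coveredCount C (boolSum C D) : ℝ) ≤ (n : ℝ) ^ ((1 : ℝ) / d)

/-- `C` is a `(≤d)`-union-free code with fast decoding. -/
def UFFDLe {t n : ℕ} (d : ℕ) (C : Fin t → Fin n → Bool) : Prop :=
  UnionFreeLe d C ∧
    ∀ D : Finset (Fin n), D.card ≤ d →
      (coveredCount C (boolSum C D) : ℝ) ≤ (n : ℝ) ^ ((1 : ℝ) / d)

/-- A code separating `d`-sets intersecting in exactly `d - 1` elements which is also a
disjunctive list-decoding code of strength `d` and list-size at most `1` is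
`(=d)`-union-free. -/
theorem unionFreeEq_of_conditions {t n d : ℕ} (C : Fin t → Fin n → Bool)
    (hSep : ∀ D1 D2 : Finset (Fin n), D1.card = d → D2.card = d →
      (D1 ∩ D2).card + 1 = d → boolSum C D1 ≠ boolSum C D2)
    (hList : ∀ D : Finset (Fin n), D.card = d →
      (Finset.univ.filter fun j : Fin n =>
        j ∉ D ∧ covers (boolSum C D) (fun i => C i j)).card ≤ 1) :
    UnionFreeEq d C := by
  intro D1 D2 h1 h2 hne heq
  have hsub : ∀ (A B : Finset (Fin n)), A.card = d → B.card = d →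
      boolSum C A = boolSum C B → (A \ B).card ≤ 1 := by
    intro A B hA hB hAB
    calc (A \ B).card ≤ (Finset.univ.filter fun j : Fin n =>
        j ∉ B ∧ covers (boolSum C B) (fun i => C i j)).card := by
          apply Finset.card_le_card
          intro j hj
          simp only [Finset.mem_sdiff] at hj
          simp only [Finset.mem_filter, Finset.mem_univ, true_and]
          refine ⟨hj.2, fun r hr => ?_⟩
          rw [← hAB]
          have h := Finset.le_sup (f := fun i => C r i) hj.1
          rw [show C r j = true from hr] at h
          exact le_antisymm (by simp) h
      _ ≤ 1 := hList B hB
  have hd1 : (D1 \ D2).card ≤ 1 := hsub D1 D2 h1 h2 heq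
  have hd2 : (D2 \ D1).card ≤ 1 := hsub D2 D1 h2 h1 heq.symm
  have hne1 : (D1 \ D2).Nonempty := by
    rw [Finset.sdiff_nonempty]
    intro hss
    exact hne (Finset.eq_of_subset_of_card_le hss (by omega))
  have hc1 := Finset.card_sdiff_add_card_inter D1 D2
  have hc2 := Finset.card_sdiff_add_card_inter D2 D1
  have hpos : 1 ≤ (D1 \ D2).card := Finset.card_pos.mpr hne1
  exact hSep D1 D2 h1 h2 (by omega) heq
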